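/- Let sn, cs, A, a be the space form functions for curvature κ ∈ {-1, 0, 1}, with a(r) := k·(A(r)/A'(r))·(cs(r)/sn(r)). Then (sn(r)^k·(1 - a(r)))' = κ·k·sn(r)·A(r) for all r in (0, diam/2). In particular, sign(1 - a(r)) = κ. -/

import Mathlib

open Real

/-- The warping function of the space form of curvature `κ ∈ {-1, 0, 1}`. -/
noncomputable def sn (κ : ℤ) (r : ℝ) : ℝ :=
  if κ = -1 then Real.sinh r else if κ = 0 then r else Real.sin r

/-- `cs = sn'`. -/
noncomputable def cs (κ : ℤ) (r : ℝ) : ℝ :=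
  if κ = -1 then Real.cosh r else if κ = 0 then 1 else Real.cos r

/-- `A(r) = ∫₀^r sn(t)^(k-1) dt`. -/
noncomputable def Afun (κ : ℤ) (k : ℕ) (r : ℝ) : ℝ :=
  ∫ t in (0:ℝ)..r, sn κ t ^ (k - 1)

/-- `a(r) = k·A(r)·cs(r)/(A'(r)·sn(r))`, with `A'(r) = sn(r)^(k-1)`. -/
noncomputable def afun (κ : ℤ) (k : ℕ) (r : ℝ) : ℝ :=
  (k : ℝ) * (Afun κ k r / sn κ r ^ (k - 1)) * (cs κ r / sn κ r)

lemma sn_zero (κ : ℤ) : sn κ 0 = 0 := by unfold sn; split_ifs <;> simp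

lemma sn_cont (κ : ℤ) : Continuous (sn κ) := by
  unfold sn; split_ifs <;> continuity

lemma hasDerivAt_sn (κ : ℤ) (hκ : κ = -1 ∨ κ = 0 ∨ κ = 1) (r : ℝ) :
    HasDerivAt (sn κ) (cs κ r) r := by
  rcases hκ with h | h | h <;> subst h <;> simp only [sn, cs] <;> norm_num
  · exact Real.hasDerivAt_sinh r
  · exact hasDerivAt_id r
  · exact Real.hasDerivAt_sin r

lemma hasDerivAt_cs (κ : ℤ) (hκ : κ = -1 ∨ κ = 0 ∨ κ = 1) (r : ℝ) :
    HasDerivAt (cs κ) (-(κ : ℝ) * sn κ r) r := by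
  rcases hκ with h | h | h <;> subst h <;> simp only [sn, cs] <;> norm_num
  · exact Real.hasDerivAt_cosh r
  · exact hasDerivAt_const r 1
  · simpa [show cs 1 = Real.cos from funext fun x => by simp [cs]] using Real.hasDerivAt_cos r

lemma sn_pos (κ : ℤ) (hκ : κ = -1 ∨ κ = 0 ∨ κ = 1) (r : ℝ) (hr : 0 < r)
    (hπ : κ = 1 → r < Real.pi) : 0 < sn κ r := by
  rcases hκ with h | h | h <;> subst h <;> simp only [sn] <;> norm_num
  · exact hr
  · exact hr
  · exact Real.sin_pos_of_pos_of_lt_pi hr (hπ rfl)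

lemma hasDerivAt_Afun (κ : ℤ) (k : ℕ) (r : ℝ) :
    HasDerivAt (Afun κ k) (sn κ r ^ (k - 1)) r := by
  have hc : Continuous fun t => sn κ t ^ (k - 1) := (sn_cont κ).pow _
  exact intervalIntegral.integral_hasDerivAt_right
    (hc.intervalIntegrable _ _)
    (hc.stronglyMeasurableAtFilter _ _)
    hc.continuousAt

lemma Afun_cont (κ : ℤ) (k : ℕ) : Continuous (Afun κ k) := by
  have h : Differentiable ℝ (Afun κ k) := fun r => (hasDerivAt_Afun κ k r).differentiableAt
  exact h.continuous

lemma Afun_zero (κ : ℤ) (k : ℕ) : Afun κ k 0 = 0 := by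
  simp [Afun]

lemma Afun_pos (κ : ℤ) (hκ : κ = -1 ∨ κ = 0 ∨ κ = 1) (k : ℕ) (r : ℝ) (hr : 0 < r)
    (hπ : κ = 1 → r ≤ Real.pi) : 0 < Afun κ k r := by
  apply intervalIntegral.intervalIntegral_pos_of_pos_on
    (((sn_cont κ).pow _).intervalIntegrable _ _) _ hr
  intro x hx
  exact pow_pos (sn_pos κ hκ x hx.1 (fun h => hx.2.trans_le (hπ h))) _

lemma hasDerivAt_g (κ : ℤ) (hκ : κ = -1 ∨ κ = 0 ∨ κ = 1) (k : ℕ) (r : ℝ) :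
    HasDerivAt (fun s => sn κ s ^ k - (k : ℝ) * Afun κ k s * cs κ s)
      ((κ : ℝ) * k * sn κ r * Afun κ k r) r := by
  have h1 := (hasDerivAt_sn κ hκ r).pow k
  have h2 := ((hasDerivAt_Afun κ k r).const_mul (k : ℝ)).mul (hasDerivAt_cs κ hκ r)
  exact (h1.sub h2).congr_deriv (by ring)

/-- `(sn(r)^k·(1 - a(r)))' = κ·k·sn(r)·A(r)` on `(0, diam/2)`, and in particular
`sign(1 - a(r)) = κ`. -/
theorem stmt4 (k : ℕ) (hk : 1 ≤ k) (κ : ℤ) (hκ : κ = -1 ∨ κ = 0 ∨ κ = 1)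
    (r : ℝ) (hr : 0 < r) (hr' : κ = 1 → r < Real.pi / 2) :
    deriv (fun s => sn κ s ^ k * (1 - afun κ k s)) r = (κ : ℝ) * k * sn κ r * Afun κ k r ∧
    Real.sign (1 - afun κ k r) = (κ : ℝ) := by
  have hpi := Real.pi_pos
  have hπ : κ = 1 → r < Real.pi := fun h => (hr' h).trans (by linarith)
  -- the open neighborhood where sn is positive
  set U : Set ℝ := Set.Ioo 0 (if κ = 1 then Real.pi else r + 1) with hU
  have hrU : r ∈ U := by
    refine ⟨hr, ?_⟩
    split_ifs with h
    · exact hπ h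
    · linarith
  have hUnhds : U ∈ nhds r := isOpen_Ioo.mem_nhds hrU
  have hsnU : ∀ s ∈ U, 0 < sn κ s := by
    intro s hs
    refine sn_pos κ hκ s hs.1 (fun h => ?_)
    have := hs.2
    rwa [if_pos h] at this
  have hpow : ∀ s : ℝ, sn κ s ^ k = sn κ s ^ (k - 1) * sn κ s := by
    intro s
    conv_lhs => rw [show k = (k - 1) + 1 by omega]
    rw [pow_succ]
  have key : ∀ s ∈ U, sn κ s ^ k * (1 - afun κ k s)
      = sn κ s ^ k - (k : ℝ) * Afun κ k s * cs κ s := by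
    intro s hs
    have hsn := (hsnU s hs).ne'
    have hsnp : sn κ s ^ (k - 1) ≠ 0 := pow_ne_zero _ hsn
    unfold afun
    rw [hpow s]
    field_simp
  have heq : (fun s => sn κ s ^ k * (1 - afun κ k s))
      =ᶠ[nhds r] (fun s => sn κ s ^ k - (k : ℝ) * Afun κ k s * cs κ s) := by
    filter_upwards [hUnhds] with s hs using key s hs
  constructor
  · rw [heq.deriv_eq]
    exact (hasDerivAt_g κ hκ k r).deriv
  · -- sign part
    have hsnr := hsnU r hrU
    have h1a : 1 - afun κ k r
        = (sn κ r ^ k - (k : ℝ) * Afun κ k r * cs κ r) / sn κ r ^ k := by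
      rw [eq_div_iff (pow_ne_zero k hsnr.ne')]
      rw [mul_comm]
      exact key r hrU
    rcases hκ with h | h | h
    · -- κ = -1 : g is strictly decreasing on [0, r], so g r < g 0 = 0
      subst h
      have hanti : StrictAntiOn (fun s => sn (-1) s ^ k - (k : ℝ) * Afun (-1) k s * cs (-1) s)
          (Set.Icc 0 r) := by
        apply strictAntiOn_of_deriv_neg (convex_Icc 0 r)
        · exact (((sn_cont _).pow _).sub ((continuous_const.mul (Afun_cont _ _)).mul (by
            unfold cs; norm_num; exact Real.continuous_cosh))).continuousOn
        · intro x hx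
          rw [interior_Icc] at hx
          rw [(hasDerivAt_g (-1) (by norm_num) k x).deriv]
          have hA := Afun_pos (-1) (by norm_num) k x hx.1 (by norm_num)
          have hs := sn_pos (-1) (by norm_num) x hx.1 (by norm_num)
          have hk0 : (0:ℝ) < k := by exact_mod_cast hk
          push_cast
          nlinarith [mul_pos (mul_pos hk0 hs) hA]
      have hg0 : (fun s => sn (-1) s ^ k - (k : ℝ) * Afun (-1) k s * cs (-1) s) 0 = 0 := by
        simp [sn_zero, Afun_zero, zero_pow (by omega : k ≠ 0)]
      have hgneg : sn (-1) r ^ k - (k : ℝ) * Afun (-1) k r * cs (-1) r < 0 := by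
        have := hanti (Set.left_mem_Icc.2 hr.le) (Set.right_mem_Icc.2 hr.le) hr
        rw [hg0] at this
        exact this
      rw [h1a, Real.sign_of_neg (div_neg_of_neg_of_pos hgneg (pow_pos hsnr k))]
      norm_num
    · -- κ = 0 : a(r) = 1
      subst h
      have hAr : Afun 0 k r = r ^ k / k := by
        have : (fun t : ℝ => sn 0 t ^ (k - 1)) = fun t : ℝ => t ^ (k - 1) := by
          funext t; simp [sn]
        rw [Afun, this, integral_pow, show k - 1 + 1 = k by omega,
          zero_pow (by omega : k ≠ 0), Nat.cast_sub hk]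
        push_cast
        ring
      have hsr : sn 0 r = r := by simp [sn]
      have hcr : cs 0 r = 1 := by simp [cs]
      have hkr : (k:ℝ) ≠ 0 := by positivity
      have : afun 0 k r = 1 := by
        unfold afun
        rw [hAr, hsr, hcr]
        rw [show r ^ k = r ^ (k-1) * r by rw [← pow_succ]; congr 1; omega]
        field_simp
      rw [this]
      simp
    · -- κ = 1 : g is strictly increasing on [0, r], so g r > g 0 = 0
      subst h
      have hmono : StrictMonoOn (fun s => sn 1 s ^ k - (k : ℝ) * Afun 1 k s * cs 1 s)
          (Set.Icc 0 r) := by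
        apply strictMonoOn_of_deriv_pos (convex_Icc 0 r)
        · exact (((sn_cont _).pow _).sub ((continuous_const.mul (Afun_cont _ _)).mul (by
            unfold cs; norm_num; exact Real.continuous_cos))).continuousOn
        · intro x hx
          rw [interior_Icc] at hx
          rw [(hasDerivAt_g 1 (by norm_num) k x).deriv]
          have hA := Afun_pos 1 (by norm_num) k x hx.1 (fun _ => (hx.2.trans (hπ rfl)).le)
          have hs := sn_pos 1 (by norm_num) x hx.1 (fun _ => hx.2.trans (hπ rfl))
          have hk0 : (0:ℝ) < k := by exact_mod_cast hk
          push_cast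
          nlinarith [mul_pos (mul_pos hk0 hs) hA]
      have hg0 : (fun s => sn 1 s ^ k - (k : ℝ) * Afun 1 k s * cs 1 s) 0 = 0 := by
        simp [sn_zero, Afun_zero, zero_pow (by omega : k ≠ 0)]
      have hgpos : 0 < sn 1 r ^ k - (k : ℝ) * Afun 1 k r * cs 1 r := by
        have := hmono (Set.left_mem_Icc.2 hr.le) (Set.right_mem_Icc.2 hr.le) hr
        rw [hg0] at this
        exact this
      rw [h1a, Real.sign_of_pos (div_pos hgpos (pow_pos hsnr k))]
      norm_num
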